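/- Let ‖·‖ be a norm on ℝ^d, X ⊆ ℝ^d compact and connected, and P a λ^d-absolutely continuous probability measure on X that is normal. Let ρ* ≥ 0 and assume that for every ρ ≥ ρ* the set M_ρ has at most one topologically connected component (i.e. M_ρ is connected or empty). Let ε, δ > 0 and let (L_ρ)_{ρ≥0} be a family of subsets of X that is decreasing in ρ (ρ₁ ≤ ρ₂ implies L_{ρ₂} ⊆ L_{ρ₁}) and satisfies M_{ρ+ε}^{−δ} ⊆ L_ρ ⊆ M_{max(ρ−ε,0)}^{+δ} for all ρ ≥ ρ*, where the enlargements are taken inside X. Fix ρ ≥ ρ* with M_{ρ+3ε}^{−δ} ≠ ∅ and let τ > 2·ψ*_{M_{ρ+ε}}(δ). Then: (a) any two points of M_{ρ+ε}^{−δ} are τ-connected in M_{ρ+ε}^{−δ}; and (b) every point x ∈ L_{ρ+2ε} and every point y ∈ M_{ρ+ε}^{−δ} are τ-connected in L_ρ. -/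

import Mathlib

open MeasureTheory ENNReal

noncomputable section

/-- `N` is a norm on `ℝ^d`. -/
structure IsNormOn (d : ℕ) (N : (Fin d → ℝ) → ℝ) : Prop where
  eq_zero_iff : ∀ x, N x = 0 ↔ x = 0
  smul : ∀ (a : ℝ) (x : Fin d → ℝ), N (a • x) = |a| * N x
  triangle : ∀ x y, N (x + y) ≤ N x + N y

/-- A symmetric kernel on `ℝ^d`: a bounded measurable function `K : ℝ^d → [0,∞)` that is
strictly positive in a neighborhood of `0`, even, and integrates to `1` with respect to
Lebesgue measure. -/
structure IsSymmKernel (d : ℕ) (K : (Fin d → ℝ) → ℝ) : Prop where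
  measurable : Measurable K
  nonneg : ∀ x, 0 ≤ K x
  bddAbove : BddAbove (Set.range K)
  pos_near_zero : ∀ᶠ x in nhds (0 : Fin d → ℝ), 0 < K x
  symm : ∀ x, K (-x) = K x
  integral_one : ∫ x, K x = 1

/-- The tail function `κ₁(r) := ∫_{ℝ^d ∖ B(0,r)} K dλ^d` of a kernel `K`, with respect to
the norm `N`. -/
def kappaOne (d : ℕ) (N K : (Fin d → ℝ) → ℝ) (r : ℝ) : ℝ :=
  ∫ x in {x : Fin d → ℝ | r < N x}, K x

/-- The tail function `κ∞(r) := sup_{x ∈ ℝ^d ∖ B(0,r)} K x` of a kernel `K`, with respect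
to the norm `N`. -/
def kappaInf (d : ℕ) (N K : (Fin d → ℝ) → ℝ) (r : ℝ) : ℝ :=
  sSup (K '' {x : Fin d → ℝ | r < N x})

/-- The infinite-sample kernel density estimator
`h_{P,δ}(x) := δ^{−d} ∫ K((x−y)/δ) dP(y)`. -/
def kdeP (d : ℕ) (K : (Fin d → ℝ) → ℝ) (δ : ℝ) (P : Measure (Fin d → ℝ))
    (x : Fin d → ℝ) : ℝ :=
  (δ ^ d)⁻¹ * ∫ y, K (δ⁻¹ • (x - y)) ∂P

/-- `h` is a Lebesgue density of the measure `P` on `ℝ^d`. -/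
def IsDensityOf (d : ℕ) (P : Measure (Fin d → ℝ)) (h : (Fin d → ℝ) → ℝ) : Prop :=
  Measurable h ∧ (∀ x, 0 ≤ h x) ∧ P = volume.withDensity fun x => ENNReal.ofReal (h x)

/-- `M_ρ`: the support of the measure `A ↦ λ^d(A ∩ {h ≥ ρ})`, i.e. the set of points all
of whose open neighborhoods intersect `{h ≥ ρ}` in a set of positive Lebesgue measure. -/
def Mset (d : ℕ) (h : (Fin d → ℝ) → ℝ) (ρ : ℝ) : Set (Fin d → ℝ) :=
  {x | ∀ U : Set (Fin d → ℝ), IsOpen U → x ∈ U → 0 < volume (U ∩ {y | ρ ≤ h y})}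

/-- `P` (with density `h`) is normal at level `ρ`: there are densities `h₁, h₂` of `P` with
`λ^d(M_ρ ∖ {h₁ ≥ ρ}) = 0` and `λ^d({h₂ > ρ} ∖ int M_ρ) = 0`. -/
def NormalAtLevel (d : ℕ) (P : Measure (Fin d → ℝ)) (h : (Fin d → ℝ) → ℝ) (ρ : ℝ) : Prop :=
  ∃ h₁ h₂, IsDensityOf d P h₁ ∧ IsDensityOf d P h₂ ∧
    volume (Mset d h ρ \ {x | ρ ≤ h₁ x}) = 0 ∧
    volume ({x | ρ < h₂ x} \ interior (Mset d h ρ)) = 0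

/-- The distance `d(x, A) := inf_{a ∈ A} ‖x − a‖ ∈ [0,∞]` of a point `x` to a set `A`,
taken with respect to the norm `N` (so `d(x, ∅) = ∞`). -/
def distN (d : ℕ) (N : (Fin d → ℝ) → ℝ) (x : Fin d → ℝ) (A : Set (Fin d → ℝ)) : ℝ≥0∞ :=
  ⨅ a ∈ A, ENNReal.ofReal (N (x - a))

/-- The enlargement `A^{+δ} := {x ∈ X : d(x, A) ≤ δ}`, taken inside `X`. -/
def plusIn (d : ℕ) (N : (Fin d → ℝ) → ℝ) (X A : Set (Fin d → ℝ)) (δ : ℝ) :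
    Set (Fin d → ℝ) :=
  {x ∈ X | distN d N x A ≤ ENNReal.ofReal δ}

/-- The erosion `A^{−δ} := X ∖ (X ∖ A)^{+δ}`, taken inside `X`. -/
def minusIn (d : ℕ) (N : (Fin d → ℝ) → ℝ) (X A : Set (Fin d → ℝ)) (δ : ℝ) :
    Set (Fin d → ℝ) :=
  X \ plusIn d N X (X \ A) δ

/-- `ψ*_A(δ) := sup_{x ∈ A} d(x, A^{−δ}) ∈ [0,∞]`. -/
def psiStarIn (d : ℕ) (N : (Fin d → ℝ) → ℝ) (X A : Set (Fin d → ℝ)) (δ : ℝ) : ℝ≥0∞ :=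
  ⨆ x ∈ A, distN d N x (minusIn d N X A δ)

/-- `x` and `y` are `τ`-connected in `A`: there are `x₁,…,x_m ∈ A` with `x₁ = x`,
`x_m = y` and `‖x_i − x_{i+1}‖ < τ` for all `i`. -/
def TauConn (d : ℕ) (N : (Fin d → ℝ) → ℝ) (τ : ℝ) (A : Set (Fin d → ℝ))
    (x y : Fin d → ℝ) : Prop :=
  ∃ (m : ℕ) (f : Fin (m + 1) → Fin d → ℝ), (∀ i, f i ∈ A) ∧ f 0 = x ∧
    f (Fin.last m) = y ∧ ∀ i : Fin m, N (f i.castSucc - f i.succ) < τ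

section Helpers

variable {d : ℕ} {N : (Fin d → ℝ) → ℝ}

lemma IsNormOn.zero' (hN : IsNormOn d N) : N 0 = 0 := (hN.eq_zero_iff 0).2 rfl

lemma IsNormOn.nonneg' (hN : IsNormOn d N) (x : Fin d → ℝ) : 0 ≤ N x := by
  have h1 : N (-x) = N x := by
    have := hN.smul (-1) x
    simpa using this
  have h2 : N 0 ≤ N x + N (-x) := by
    have := hN.triangle x (-x)
    simpa using this
  rw [hN.zero', h1] at h2; linarith

lemma IsNormOn.symm' (hN : IsNormOn d N) (x y : Fin d → ℝ) : N (x - y) = N (y - x) := by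
  have := hN.smul (-1) (x - y)
  simpa [neg_sub] using this.symm

lemma IsNormOn.tri' (hN : IsNormOn d N) (a b c : Fin d → ℝ) :
    N (a - c) ≤ N (a - b) + N (b - c) := by
  have := hN.triangle (a - b) (b - c)
  rwa [sub_add_sub_cancel] at this

lemma IsNormOn.sum_le' (hN : IsNormOn d N) {ι : Type*} (s : Finset ι) (g : ι → Fin d → ℝ) :
    N (∑ i ∈ s, g i) ≤ ∑ i ∈ s, N (g i) := by
  classical
  induction s using Finset.induction_on with
  | empty => simp [hN.zero']
  | insert _ _ hns ih =>
    rw [Finset.sum_insert hns, Finset.sum_insert hns]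
    exact le_trans (hN.triangle _ _) (by linarith)

lemma IsNormOn.continuous' (hN : IsNormOn d N) : Continuous N := by
  classical
  set C : ℝ := ∑ i : Fin d, N (Pi.single i 1) with hC
  have hCnn : 0 ≤ C := Finset.sum_nonneg fun i _ => hN.nonneg' _
  have key : ∀ a b : Fin d → ℝ, N (a - b) ≤ dist a b * C := by
    intro a b
    have hab : a - b = ∑ i : Fin d, (a i - b i) • (Pi.single i 1 : Fin d → ℝ) := by
      funext j
      simp [Finset.sum_apply, Pi.single_apply, mul_ite]
    calc N (a - b) ≤ ∑ i : Fin d, N ((a i - b i) • (Pi.single i 1 : Fin d → ℝ)) := by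
          rw [hab]; exact hN.sum_le' _ _
      _ = ∑ i : Fin d, |a i - b i| * N (Pi.single i (1 : ℝ)) := by
          simp [hN.smul]
      _ ≤ ∑ i : Fin d, dist a b * N (Pi.single i (1 : ℝ)) := by
          refine Finset.sum_le_sum fun i _ => ?_
          refine mul_le_mul_of_nonneg_right ?_ (hN.nonneg' _)
          rw [← Real.dist_eq]
          exact dist_le_pi_dist a b i
      _ = dist a b * C := by rw [hC, Finset.mul_sum]
  rw [Metric.continuous_iff]
  intro b ε hε
  refine ⟨ε / (C + 1), by positivity, fun a hab => ?_⟩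
  have habs : |N a - N b| ≤ N (a - b) := by
    have t1 : N a ≤ N (a - b) + N b := by
      have := hN.triangle (a - b) b
      have e : a - b + b = a := by abel
      rwa [e] at this
    have t2 : N b ≤ N (b - a) + N a := by
      have := hN.triangle (b - a) a
      have e : b - a + a = b := by abel
      rwa [e] at this
    have hsym := hN.symm' a b
    rw [abs_sub_le_iff]
    constructor <;> linarith
  have h2 := key a b
  have h3 : dist a b * (C + 1) < ε := (lt_div_iff₀ (by linarith)).mp hab
  have h4 : dist a b * C ≤ dist a b * (C + 1) := by
    have := dist_nonneg (x := a) (y := b); nlinarith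
  rw [Real.dist_eq]
  linarith [abs_nonneg (N a - N b)]

lemma isOpen_ballN (hN : IsNormOn d N) (z : Fin d → ℝ) (η : ℝ) :
    IsOpen {u : Fin d → ℝ | N (u - z) < η} := by
  have hc : Continuous fun u : Fin d → ℝ => N (u - z) :=
    hN.continuous'.comp (continuous_id.sub continuous_const)
  exact isOpen_lt hc continuous_const

lemma distN_le_of_mem {x a : Fin d → ℝ} {A : Set (Fin d → ℝ)} (ha : a ∈ A) :
    distN d N x A ≤ ENNReal.ofReal (N (x - a)) := by
  exact iInf₂_le a ha

lemma exists_near_of_distN_lt {x : Fin d → ℝ} {A : Set (Fin d → ℝ)} {c : ℝ≥0∞}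
    (hlt : distN d N x A < c) : ∃ a ∈ A, ENNReal.ofReal (N (x - a)) < c := by
  unfold distN at hlt
  rw [iInf_lt_iff] at hlt
  obtain ⟨a, ha⟩ := hlt
  rw [iInf_lt_iff] at ha
  obtain ⟨haA, h⟩ := ha
  exact ⟨a, haA, h⟩

lemma isClosed_Mset (d : ℕ) (h : (Fin d → ℝ) → ℝ) (ρ : ℝ) : IsClosed (Mset d h ρ) := by
  rw [← isOpen_compl_iff, isOpen_iff_forall_mem_open]
  intro x hx
  simp only [Mset, Set.mem_compl_iff, Set.mem_setOf_eq] at hx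
  push_neg at hx
  obtain ⟨U, hUo, hxU, hU⟩ := hx
  exact ⟨U, fun y hy hyM => absurd (hyM U hUo hy) (not_lt.mpr hU), hUo, hxU⟩

lemma minusIn_subset {X A : Set (Fin d → ℝ)} {δ : ℝ} (hN : IsNormOn d N) (hδ : 0 ≤ δ) :
    minusIn d N X A δ ⊆ A := by
  intro x hx
  by_contra hxA
  refine hx.2 ⟨hx.1, ?_⟩
  calc distN d N x (X \ A) ≤ ENNReal.ofReal (N (x - x)) := distN_le_of_mem ⟨hx.1, hxA⟩
    _ = 0 := by simp [hN.zero']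
    _ ≤ ENNReal.ofReal δ := zero_le

lemma tauConn_refl {τ : ℝ} {A : Set (Fin d → ℝ)} {x : Fin d → ℝ} (hx : x ∈ A) :
    TauConn d N τ A x x :=
  ⟨0, fun _ => x, fun _ => hx, rfl, rfl, fun i => i.elim0⟩

lemma TauConn.mono' {τ : ℝ} {A B : Set (Fin d → ℝ)} {x y : Fin d → ℝ} (hAB : A ⊆ B)
    (hc : TauConn d N τ A x y) : TauConn d N τ B x y := by
  obtain ⟨m, f, hfA, hf0, hfl, hstep⟩ := hc
  exact ⟨m, f, fun i => hAB (hfA i), hf0, hfl, hstep⟩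

lemma TauConn.snoc' {τ : ℝ} {A : Set (Fin d → ℝ)} {x z w : Fin d → ℝ}
    (hc : TauConn d N τ A x z) (hw : w ∈ A) (hzw : N (z - w) < τ) :
    TauConn d N τ A x w := by
  obtain ⟨m, f, hfA, hf0, hfl, hstep⟩ := hc
  refine ⟨m + 1, Fin.snoc f w, ?_, ?_, ?_, ?_⟩
  · intro i
    refine Fin.lastCases ?_ (fun j => ?_) i
    · simpa [Fin.snoc_last] using hw
    · simpa [Fin.snoc_castSucc] using hfA j
  · have h0 : (0 : Fin (m + 1 + 1)) = Fin.castSucc 0 := rfl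
    rw [h0, Fin.snoc_castSucc, hf0]
  · rw [Fin.snoc_last]
  · intro i
    refine Fin.lastCases ?_ (fun j => ?_) i
    · have h1 : (Fin.last m).succ = Fin.last (m + 1) := by
        simp [Fin.succ_last]
      rw [h1, Fin.snoc_last, Fin.snoc_castSucc, hfl]
      exact hzw
    · have h1 : (Fin.castSucc j).succ = (Fin.succ j).castSucc := Fin.succ_castSucc j
      rw [h1, Fin.snoc_castSucc, Fin.snoc_castSucc]
      exact hstep j

lemma TauConn.cons' {τ : ℝ} {A : Set (Fin d → ℝ)} {x z y : Fin d → ℝ}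
    (hx : x ∈ A) (hxz : N (x - z) < τ) (hc : TauConn d N τ A z y) :
    TauConn d N τ A x y := by
  obtain ⟨m, f, hfA, hf0, hfl, hstep⟩ := hc
  refine ⟨m + 1, Fin.cons x f, ?_, rfl, ?_, ?_⟩
  · intro i
    refine Fin.cases ?_ (fun j => ?_) i
    · simpa using hx
    · simpa using hfA j
  · have h1 : Fin.last (m + 1) = (Fin.last m).succ := rfl
    rw [h1, Fin.cons_succ, hfl]
  · intro i
    refine Fin.cases ?_ (fun j => ?_) i
    · rw [Fin.castSucc_zero, Fin.cons_zero, Fin.cons_succ, hf0]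
      exact hxz
    · have h1 : (Fin.succ j).castSucc = (Fin.castSucc j).succ := (Fin.succ_castSucc j).symm
      rw [h1, Fin.cons_succ, Fin.cons_succ]
      exact hstep j

/-- A preconnected set is `η`-chain-connected for every `η > 0`. -/
lemma tauConn_of_isPreconnected (hN : IsNormOn d N) {A : Set (Fin d → ℝ)}
    (hA : IsPreconnected A) {η : ℝ} (hη : 0 < η) {x y : Fin d → ℝ}
    (hx : x ∈ A) (hy : y ∈ A) : TauConn d N η A x y := by
  by_contra hcon
  set S := {z : Fin d → ℝ | TauConn d N η A x z} with hS
  set U := ⋃ z ∈ A ∩ S, {u : Fin d → ℝ | N (u - z) < η} with hU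
  set V := ⋃ z ∈ A \ S, {u : Fin d → ℝ | N (u - z) < η} with hV
  have hUo : IsOpen U := isOpen_biUnion fun z _ => isOpen_ballN hN z η
  have hVo : IsOpen V := isOpen_biUnion fun z _ => isOpen_ballN hN z η
  have hself : ∀ z : Fin d → ℝ, z ∈ {u : Fin d → ℝ | N (u - z) < η} := by
    intro z; simp [hN.zero', hη]
  have hcover : A ⊆ U ∪ V := by
    intro z hz
    by_cases hzS : z ∈ S
    · exact Or.inl (Set.mem_biUnion ⟨hz, hzS⟩ (hself z))
    · exact Or.inr (Set.mem_biUnion ⟨hz, hzS⟩ (hself z))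
  have hne : (A ∩ (U ∩ V)).Nonempty := by
    refine hA U V hUo hVo hcover ⟨x, hx, ?_⟩ ⟨y, hy, ?_⟩
    · exact Set.mem_biUnion ⟨hx, tauConn_refl hx⟩ (hself x)
    · exact Set.mem_biUnion ⟨hy, hcon⟩ (hself y)
  obtain ⟨p, hpA, hpU, hpV⟩ := hne
  obtain ⟨z₁, hz₁, hpz₁⟩ := Set.mem_iUnion₂.mp hpU
  obtain ⟨z₂, hz₂, hpz₂⟩ := Set.mem_iUnion₂.mp hpV
  refine hz₂.2 ?_
  have hc1 : TauConn d N η A x p := by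
    refine TauConn.snoc' hz₁.2 hpA ?_
    rw [hN.symm']
    exact hpz₁
  exact TauConn.snoc' hc1 hz₂.1 hpz₂

end Helpers

/-- (Connectivity control, cf. Theorem `estim-control-low` i).)
Let `X ⊆ ℝ^d` be compact and connected and `P` a normal Lebesgue-absolutely continuous
probability measure on `X` such that `M_ρ` has at most one connected component for all
`ρ ≥ ρ*`.  Let `(L_ρ)` be a decreasing family of subsets of `X` with
`M_{ρ+ε}^{−δ} ⊆ L_ρ ⊆ M_{max(ρ−ε,0)}^{+δ}` for all `ρ ≥ ρ*`.  Fix `ρ ≥ ρ*` with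
`M_{ρ+3ε}^{−δ} ≠ ∅` and `τ > 2ψ*_{M_{ρ+ε}}(δ)`.  Then (a) any two points of
`M_{ρ+ε}^{−δ}` are `τ`-connected in `M_{ρ+ε}^{−δ}`, and (b) every `x ∈ L_{ρ+2ε}` and
every `y ∈ M_{ρ+ε}^{−δ}` are `τ`-connected in `L_ρ`. -/
theorem tau_connected_control {d : ℕ} (hd : 0 < d)
    (N : (Fin d → ℝ) → ℝ) (hN : IsNormOn d N)
    (X : Set (Fin d → ℝ)) (hXcompact : IsCompact X) (hXconn : IsConnected X)
    (P : Measure (Fin d → ℝ)) [IsProbabilityMeasure P] (hPX : P Xᶜ = 0)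
    (h : (Fin d → ℝ) → ℝ) (hdens : IsDensityOf d P h)
    (hnormal : ∀ ρ : ℝ, 0 ≤ ρ → NormalAtLevel d P h ρ)
    (ρstar : ℝ) (hρstar : 0 ≤ ρstar)
    (hconn : ∀ ρ : ℝ, ρstar ≤ ρ → IsPreconnected (Mset d h ρ))
    (ε δ : ℝ) (hε : 0 < ε) (hδ : 0 < δ)
    (L : ℝ → Set (Fin d → ℝ)) (hLX : ∀ ρ, L ρ ⊆ X)
    (hLdec : ∀ ρ₁ ρ₂ : ℝ, ρ₁ ≤ ρ₂ → L ρ₂ ⊆ L ρ₁)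
    (hLincl : ∀ ρ : ℝ, ρstar ≤ ρ →
      minusIn d N X (Mset d h (ρ + ε)) δ ⊆ L ρ ∧
      L ρ ⊆ plusIn d N X (Mset d h (max (ρ - ε) 0)) δ)
    (ρ : ℝ) (hρ : ρstar ≤ ρ)
    (hne : (minusIn d N X (Mset d h (ρ + 3 * ε)) δ).Nonempty)
    (τ : ℝ) (hτ : 2 * psiStarIn d N X (Mset d h (ρ + ε)) δ < ENNReal.ofReal τ) :
    (∀ x ∈ minusIn d N X (Mset d h (ρ + ε)) δ,
      ∀ y ∈ minusIn d N X (Mset d h (ρ + ε)) δ,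
        TauConn d N τ (minusIn d N X (Mset d h (ρ + ε)) δ) x y) ∧
    (∀ x ∈ L (ρ + 2 * ε), ∀ y ∈ minusIn d N X (Mset d h (ρ + ε)) δ,
        TauConn d N τ (L ρ) x y) := by
  set M := Mset d h (ρ + ε) with hM
  set Mm := minusIn d N X M δ with hMmdef
  set ψ := psiStarIn d N X M δ with hψdef
  have hMconn : IsPreconnected M := hconn (ρ + ε) (by linarith)
  have hMclosed : IsClosed M := isClosed_Mset d h (ρ + ε)
  obtain ⟨t, ht0', h2ψ, htτ'⟩ := ENNReal.lt_iff_exists_real_btwn.mp hτ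
  have ht0 : 0 < t :=
    ENNReal.ofReal_pos.mp (lt_of_le_of_lt zero_le h2ψ)
  have htτ : t < τ := (ENNReal.ofReal_lt_ofReal_iff_of_nonneg ht0.le).mp htτ'
  have hψlt : ψ < ENNReal.ofReal (t / 2) := by
    by_contra hc
    push_neg at hc
    have h1 : ENNReal.ofReal t ≤ 2 * ψ := by
      have h2 : ENNReal.ofReal t = 2 * ENNReal.ofReal (t / 2) := by
        calc ENNReal.ofReal t = ENNReal.ofReal (2 * (t / 2)) := by
              rw [show (2 : ℝ) * (t / 2) = t by ring]
          _ = ENNReal.ofReal 2 * ENNReal.ofReal (t / 2) := ENNReal.ofReal_mul (by norm_num)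
          _ = 2 * ENNReal.ofReal (t / 2) := by norm_num
      rw [h2]
      gcongr
    exact absurd h2ψ (not_lt.mpr h1)
  have near : ∀ z ∈ M, ∃ w ∈ Mm, N (z - w) < t / 2 := by
    intro z hz
    have h1 : distN d N z Mm ≤ ψ := by
      rw [hψdef]
      unfold psiStarIn
      exact le_iSup₂ (f := fun x _ => distN d N x (minusIn d N X M δ)) z hz
    obtain ⟨w, hwMm, hw⟩ := exists_near_of_distN_lt (lt_of_le_of_lt h1 hψlt)
    refine ⟨w, hwMm, ?_⟩
    rwa [ENNReal.ofReal_lt_ofReal_iff (by linarith)] at hw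
  have hMmM : Mm ⊆ M := minusIn_subset hN hδ.le
  have parta : ∀ x ∈ Mm, ∀ y ∈ Mm, TauConn d N τ Mm x y := by
    intro x hx y hy
    have hη : 0 < (τ - t) / 2 := by linarith
    obtain ⟨m, z, hzM, hz0, hzl, hzstep⟩ :=
      tauConn_of_isPreconnected hN hMconn hη (hMmM hx) (hMmM hy)
    have hwex : ∀ j : Fin (m + 1), ∃ w, w ∈ Mm ∧ N (z j - w) < t / 2 := by
      intro j
      obtain ⟨w, h1, h2⟩ := near (z j) (hzM j)
      exact ⟨w, h1, h2⟩
    choose w hwMm hwd using hwex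
    set f : Fin (m + 1) → (Fin d → ℝ) :=
      fun j => if j = 0 then x else if j = Fin.last m then y else w j with hf
    have hfMm : ∀ j, f j ∈ Mm := by
      intro j
      simp only [hf]
      split_ifs
      exacts [hx, hy, hwMm j]
    have hfd : ∀ j, N (z j - f j) < t / 2 := by
      intro j
      simp only [hf]
      split_ifs with h1 h2
      · subst h1; rw [hz0, sub_self, hN.zero']; linarith
      · subst h2; rw [hzl, sub_self, hN.zero']; linarith
      · exact hwd j
    refine ⟨m, f, hfMm, ?_, ?_, ?_⟩
    · simp [hf]
    · by_cases hm : Fin.last m = (0 : Fin (m + 1))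
      · simp only [hf]
        rw [if_pos hm, ← hz0, ← hzl, hm]
      · simp [hf, hm]
    · intro i
      have s1 : N (f i.castSucc - f i.succ) ≤
          N (f i.castSucc - z i.castSucc) + N (z i.castSucc - f i.succ) := hN.tri' _ _ _
      have s2 : N (z i.castSucc - f i.succ) ≤
          N (z i.castSucc - z i.succ) + N (z i.succ - f i.succ) := hN.tri' _ _ _
      have s3 : N (f i.castSucc - z i.castSucc) = N (z i.castSucc - f i.castSucc) :=
        hN.symm' _ _
      have h1 := hfd i.castSucc
      have h2 := hfd i.succ
      have h3 := hzstep i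
      linarith
  refine ⟨parta, ?_⟩
  intro x hx y hy
  have hMmL : Mm ⊆ L ρ := (hLincl ρ hρ).1
  have hxL : x ∈ L ρ := hLdec ρ (ρ + 2 * ε) (by linarith) hx
  have hτpos : 0 < τ := lt_trans ht0 htτ
  have hwex : ∃ w ∈ Mm, N (x - w) < τ := by
    by_cases hXM : ∀ p ∈ X, p ∈ M
    · have hxMm : x ∈ Mm := by
        refine ⟨hLX _ hx, ?_⟩
        intro hcon
        have hempty : X \ M = ∅ := Set.diff_eq_empty.mpr hXM
        have htop : distN d N x (X \ M) = ⊤ := by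
          rw [hempty]; simp [distN]
        have h7 := hcon.2
        rw [htop] at h7
        exact ENNReal.ofReal_ne_top (top_le_iff.mp h7)
      exact ⟨x, hxMm, by rw [sub_self, hN.zero']; exact hτpos⟩
    · push_neg at hXM
      obtain ⟨p, hpX, hpM⟩ := hXM
      have hyX : y ∈ X := hy.1
      have hyM : y ∈ M := hMmM hy
      have hbd : ∃ z ∈ X, z ∈ M ∧ z ∈ closure (X \ M) := by
        by_contra hcon
        push_neg at hcon
        have hpre := hXconn.isPreconnected
        have hco : X ⊆ (closure (X \ M))ᶜ ∪ Mᶜ := by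
          intro q hq
          by_cases hqM : q ∈ M
          · exact Or.inl (hcon q hq hqM)
          · exact Or.inr hqM
        have hne1 : (X ∩ (closure (X \ M))ᶜ).Nonempty := ⟨y, hyX, hcon y hyX hyM⟩
        have hne2 : (X ∩ Mᶜ).Nonempty := ⟨p, hpX, hpM⟩
        obtain ⟨q, hqX, hqU, hqV⟩ :=
          hpre _ _ isClosed_closure.isOpen_compl hMclosed.isOpen_compl hco hne1 hne2
        exact hqU (subset_closure ⟨hqX, hqV⟩)
      obtain ⟨z, hzX, hzM, hzcl⟩ := hbd
      have hδψ : ENNReal.ofReal δ ≤ ψ := by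
        have hzd : ENNReal.ofReal δ ≤ distN d N z Mm := by
          simp only [distN]
          refine le_iInf₂ fun w' hw' => ?_
          have hw'X : w' ∈ X := hw'.1
          have hw'd : ENNReal.ofReal δ < distN d N w' (X \ M) := by
            by_contra hc
            push_neg at hc
            exact hw'.2 ⟨hw'X, hc⟩
          rw [ENNReal.ofReal_le_ofReal_iff (hN.nonneg' _)]
          by_contra hlt
          push_neg at hlt
          have hη'pos : 0 < δ - N (z - w') := by linarith
          obtain ⟨u, huball, huXM⟩ :=
            mem_closure_iff.mp hzcl _ (isOpen_ballN hN z (δ - N (z - w')))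
              (by simp [hN.zero', hη'pos])
          have h1 : distN d N w' (X \ M) ≤ ENNReal.ofReal (N (w' - u)) :=
            distN_le_of_mem huXM
          have h2 : N (w' - u) ≤ N (w' - z) + N (z - u) := hN.tri' _ _ _
          have h3 : N (z - u) < δ - N (z - w') := by rw [hN.symm']; exact huball
          have h4 : N (w' - z) = N (z - w') := hN.symm' _ _
          have h5 : ENNReal.ofReal (N (w' - u)) < ENNReal.ofReal δ := by
            rw [ENNReal.ofReal_lt_ofReal_iff hδ]
            linarith
          exact absurd (lt_of_le_of_lt h1 h5) (not_lt.mpr hw'd.le)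
        refine le_trans hzd ?_
        rw [hψdef]
        unfold psiStarIn
        exact le_iSup₂ (f := fun x _ => distN d N x (minusIn d N X M δ)) z hzM
      have hdxM : distN d N x M ≤ ENNReal.ofReal δ := by
        have hmem := (hLincl (ρ + 2 * ε) (by linarith)).2 hx
        have hmax : max (ρ + 2 * ε - ε) 0 = ρ + ε := by
          rw [max_eq_left (by linarith)]; ring
        rw [hmax] at hmem
        exact hmem.2
      have hxMlt : distN d N x M < ENNReal.ofReal (t / 2) :=
        lt_of_le_of_lt (le_trans hdxM hδψ) hψlt
      obtain ⟨a, haM, hxa⟩ := exists_near_of_distN_lt hxMlt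
      rw [ENNReal.ofReal_lt_ofReal_iff (by linarith)] at hxa
      obtain ⟨w, hwMm, haw⟩ := near a haM
      refine ⟨w, hwMm, ?_⟩
      have htri := hN.tri' x a w
      linarith
  obtain ⟨w, hwMm, hxw⟩ := hwex
  exact TauConn.cons' hxL hxw (TauConn.mono' hMmL (parta w hwMm y hy))
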